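/- Let E be a finite-dimensional real inner product space, T > 0, and F : E → [0,∞] (extended nonnegative reals) convex, lower semicontinuous, with F(0) = 0. Let v : ℝ → E be Bochner integrable, supported in [0,T], with ∫₀^T F(v(t)) dt < ∞. For h > 0 set η_h(t) = h⁻¹·1_{[−h,0]}(t) and η_{−h}(t) = h⁻¹·1_{[0,h]}(t), and for ε > 0 let ξ_ε : ℝ → [0,1] be a continuous function supported in (0,T) with ξ_ε = 1 on [ε, T − ε]. Define the regularization [v]_{h,ε}(t) = ξ_ε(t)·(η_{−h} * η_h * (ξ_ε v))(t). Then: (i) for every h, ε > 0, ∫₀^T F([v]_{h,ε}(t)) dt ≤ ∫₀^T F(ξ_ε(t) v(t)) dt; and (ii) ∫₀^T F(ξ_ε(t) v(t)) dt → ∫₀^T F(v(t)) dt as ε → 0. Consequently limsup_{ε→0} sup_{h>0} ∫₀^T F([v]_{h,ε}(t)) dt ≤ ∫₀^T F(v(t)) dt. -/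

import Mathlib

open MeasureTheory Filter Topology
open scoped ENNReal

/-- Convexity for an extended-nonnegative-real-valued function on a real vector space. -/
def ConvexENN {E : Type*} [AddCommMonoid E] [Module ℝ E] (F : E → ℝ≥0∞) : Prop :=
  ∀ x y : E, ∀ a b : ℝ, 0 ≤ a → 0 ≤ b → a + b = 1 →
    F (a • x + b • y) ≤ ENNReal.ofReal a * F x + ENNReal.ofReal b * F y

/-- Convolution in the time variable: `(η * w)(t) = ∫ η(t − s) w(s) ds`. -/
noncomputable def convT {E : Type*} [NormedAddCommGroup E] [NormedSpace ℝ E]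
    (η : ℝ → ℝ) (w : ℝ → E) (t : ℝ) : E :=
  ∫ s, η (t - s) • w s

/-- The mollifier `η_h(t) = h⁻¹ 1_{[−h, 0]}(t)`. -/
noncomputable def etaP (h t : ℝ) : ℝ := h⁻¹ * Set.indicator (Set.Icc (-h) 0) (fun _ => (1 : ℝ)) t

/-- The mollifier `η_{−h}(t) = h⁻¹ 1_{[0, h]}(t)`. -/
noncomputable def etaM (h t : ℝ) : ℝ := h⁻¹ * Set.indicator (Set.Icc 0 h) (fun _ => (1 : ℝ)) t

/-- The regularization `[v]_{h,ε}(t) = ξ_ε(t) · (η_{−h} * η_h * (ξ_ε v))(t)`. -/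
noncomputable def reg {E : Type*} [NormedAddCommGroup E] [NormedSpace ℝ E]
    (h : ℝ) (ξ : ℝ → ℝ) (v : ℝ → E) (t : ℝ) : E :=
  ξ t • convT (etaM h) (convT (etaP h) (fun r => ξ r • v r)) t

set_option linter.unusedSectionVars false
set_option maxHeartbeats 1000000

section Jensen

variable {E : Type*} [NormedAddCommGroup E] [NormedSpace ℝ E]

/-- Moreau–Yosida type regularization of `F`. -/
noncomputable def moreau (F : E → ℝ≥0∞) (n : ℕ) (x : E) : ℝ≥0∞ :=
  ⨅ y : E, F y + ENNReal.ofReal (n * ‖x - y‖)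

variable {F : E → ℝ≥0∞}

lemma moreau_le_self (n : ℕ) (x : E) : moreau F n x ≤ F x := by
  simpa [moreau] using iInf_le (fun y => F y + ENNReal.ofReal (n * ‖x - y‖)) x

lemma moreau_le_add (n : ℕ) (x z : E) :
    moreau F n x ≤ moreau F n z + ENNReal.ofReal (n * ‖x - z‖) := by
  simp only [moreau]
  rw [ENNReal.iInf_add]
  refine le_iInf fun y => ?_
  refine le_trans (iInf_le _ y) ?_
  rw [add_assoc]
  gcongr
  rw [← ENNReal.ofReal_add (by positivity) (by positivity), ← mul_add]
  apply ENNReal.ofReal_le_ofReal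
  have : ‖x - y‖ ≤ ‖z - y‖ + ‖x - z‖ := by
    have := dist_triangle x z y
    simpa [dist_eq_norm, add_comm] using this
  nlinarith [this, (by positivity : (0:ℝ) ≤ (n:ℝ))]

lemma moreau_le_ofReal (hF0 : F 0 = 0) (n : ℕ) (x : E) :
    moreau F n x ≤ ENNReal.ofReal (n * ‖x‖) := by
  simpa [hF0, moreau] using iInf_le (fun y => F y + ENNReal.ofReal (n * ‖x - y‖)) 0

lemma moreau_ne_top (hF0 : F 0 = 0) (n : ℕ) (x : E) : moreau F n x ≠ ∞ :=
  ((moreau_le_ofReal hF0 n x).trans_lt ENNReal.ofReal_lt_top).ne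

lemma moreau_zero (hF0 : F 0 = 0) (n : ℕ) : moreau F n 0 = 0 :=
  le_antisymm (by simpa [hF0] using moreau_le_self (F := F) n 0) zero_le

lemma moreau_convex (hconv : ConvexENN F) (n : ℕ) : ConvexENN (moreau F n) := by
  intro x y a b ha hb hab
  rw [show moreau F n x = ⨅ p : E, F p + ENNReal.ofReal (n * ‖x - p‖) from rfl,
    show moreau F n y = ⨅ q : E, F q + ENNReal.ofReal (n * ‖y - q‖) from rfl,
    ENNReal.mul_iInf (fun h => absurd h ENNReal.ofReal_ne_top),
    ENNReal.mul_iInf (fun h => absurd h ENNReal.ofReal_ne_top),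
    ENNReal.iInf_add]
  refine le_iInf fun p => ?_
  rw [ENNReal.add_iInf]
  refine le_iInf fun q => ?_
  refine le_trans (iInf_le _ (a • p + b • q)) ?_
  have hnorm : ‖a • x + b • y - (a • p + b • q)‖ ≤ a * ‖x - p‖ + b * ‖y - q‖ := by
    have : a • x + b • y - (a • p + b • q) = a • (x - p) + b • (y - q) := by
      module
    rw [this]
    refine (norm_add_le _ _).trans ?_
    simp only [norm_smul, Real.norm_eq_abs, abs_of_nonneg ha, abs_of_nonneg hb, le_refl]
  have h1 : ENNReal.ofReal (n * ‖a • x + b • y - (a • p + b • q)‖)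
      ≤ ENNReal.ofReal a * ENNReal.ofReal (n * ‖x - p‖)
        + ENNReal.ofReal b * ENNReal.ofReal (n * ‖y - q‖) := by
    rw [← ENNReal.ofReal_mul ha, ← ENNReal.ofReal_mul hb,
      ← ENNReal.ofReal_add (by positivity) (by positivity)]
    apply ENNReal.ofReal_le_ofReal
    nlinarith [hnorm, (by positivity : (0:ℝ) ≤ (n:ℝ))]
  calc F (a • p + b • q) + ENNReal.ofReal (n * ‖a • x + b • y - (a • p + b • q)‖)
      ≤ (ENNReal.ofReal a * F p + ENNReal.ofReal b * F q)
        + (ENNReal.ofReal a * ENNReal.ofReal (n * ‖x - p‖)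
          + ENNReal.ofReal b * ENNReal.ofReal (n * ‖y - q‖)) := by
        exact add_le_add (hconv p q a b ha hb hab) h1
    _ = ENNReal.ofReal a * (F p + ENNReal.ofReal (n * ‖x - p‖))
        + ENNReal.ofReal b * (F q + ENNReal.ofReal (n * ‖y - q‖)) := by
        rw [mul_add, mul_add]; ring

lemma moreau_iSup (hlsc : LowerSemicontinuous F) (x : E) :
    ⨆ n : ℕ, moreau F n x = F x := by
  refine le_antisymm (iSup_le fun n => moreau_le_self n x) ?_
  refine le_of_forall_lt fun c hc => ?_
  obtain ⟨c', hc1, hc2⟩ := exists_between hc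
  have h1 : ∀ᶠ y in 𝓝 x, c' < F y := hlsc x c' hc2
  obtain ⟨δ, hδ, hball⟩ := Metric.eventually_nhds_iff_ball.mp h1
  obtain ⟨n, hn⟩ := exists_nat_ge (c'.toReal / δ)
  refine lt_of_lt_of_le hc1 (le_iSup_of_le n (le_iInf fun y => ?_))
  by_cases hy : y ∈ Metric.ball x δ
  · exact le_trans (hball y hy).le le_self_add
  · refine le_trans ?_ le_add_self
    rw [ENNReal.le_ofReal_iff_toReal_le (ne_top_of_lt hc2) (by positivity)]
    have hxy : δ ≤ ‖x - y‖ := by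
      simp only [Metric.mem_ball, dist_eq_norm] at hy
      rw [norm_sub_rev]; linarith [not_lt.mp hy]
    have h2 : c'.toReal ≤ n * δ := by
      rw [div_le_iff₀ hδ] at hn; linarith
    nlinarith [(by positivity : (0:ℝ) ≤ (n:ℝ))]

end Jensen

section Jensen2

variable {E : Type*} [NormedAddCommGroup E] [NormedSpace ℝ E] {F : E → ℝ≥0∞}

/-- real-valued Moreau regularization -/
noncomputable def moreauR (F : E → ℝ≥0∞) (n : ℕ) (x : E) : ℝ := (moreau F n x).toReal

lemma moreauR_nonneg (n : ℕ) (x : E) : 0 ≤ moreauR F n x := ENNReal.toReal_nonneg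

lemma ofReal_moreauR (hF0 : F 0 = 0) (n : ℕ) (x : E) :
    ENNReal.ofReal (moreauR F n x) = moreau F n x :=
  ENNReal.ofReal_toReal (moreau_ne_top hF0 n x)

lemma moreauR_continuous (hF0 : F 0 = 0) (n : ℕ) : Continuous (moreauR F n) := by
  have key : ∀ x z : E, moreauR F n x - moreauR F n z ≤ n * ‖x - z‖ := by
    intro x z
    have h1 := moreau_le_add (F := F) n x z
    have h2 : (moreau F n z + ENNReal.ofReal (n * ‖x - z‖)).toReal
        = moreauR F n z + n * ‖x - z‖ := by
      rw [ENNReal.toReal_add (moreau_ne_top hF0 n z) ENNReal.ofReal_ne_top, moreauR,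
        ENNReal.toReal_ofReal (by positivity)]
    have h3 := ENNReal.toReal_mono (by simp [ENNReal.add_ne_top, moreau_ne_top hF0 n z, ENNReal.mul_eq_top]) h1
    rw [h2] at h3
    have h4 : moreauR F n x ≤ moreauR F n z + n * ‖x - z‖ := h3
    linarith
  refine (LipschitzWith.of_dist_le_mul (K := n) (f := moreauR F n) fun x z => ?_).continuous
  rw [Real.dist_eq, dist_eq_norm, abs_sub_le_iff]
  constructor
  · simpa using key x z
  · have := key z x
    rwa [norm_sub_rev] at this

lemma moreauR_convexOn (hconv : ConvexENN F) (hF0 : F 0 = 0) (n : ℕ) :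
    ConvexOn ℝ Set.univ (moreauR F n) := by
  refine ⟨convex_univ, fun x _ y _ a b ha hb hab => ?_⟩
  have h1 := moreau_convex hconv n x y a b ha hb hab
  have h2 := ENNReal.toReal_mono (a := moreau F n (a • x + b • y)) ?_ h1
  · rw [ENNReal.toReal_add, ENNReal.toReal_mul, ENNReal.toReal_mul,
      ENNReal.toReal_ofReal ha, ENNReal.toReal_ofReal hb] at h2
    · exact h2
    · exact ENNReal.mul_ne_top ENNReal.ofReal_ne_top (moreau_ne_top hF0 n x)
    · exact ENNReal.mul_ne_top ENNReal.ofReal_ne_top (moreau_ne_top hF0 n y)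
  · exact ENNReal.add_ne_top.mpr
      ⟨ENNReal.mul_ne_top ENNReal.ofReal_ne_top (moreau_ne_top hF0 n x),
       ENNReal.mul_ne_top ENNReal.ofReal_ne_top (moreau_ne_top hF0 n y)⟩

lemma moreauR_le (hF0 : F 0 = 0) (n : ℕ) (x : E) : moreauR F n x ≤ n * ‖x‖ := by
  have := ENNReal.toReal_mono ENNReal.ofReal_ne_top (moreau_le_ofReal hF0 n x)
  rwa [ENNReal.toReal_ofReal (by positivity)] at this

/-- **Jensen's inequality** for lower semicontinuous ENNReal-valued convex functions. -/
lemma jensenENN {α : Type*} [MeasurableSpace α] (μ : Measure α) [IsProbabilityMeasure μ]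
    [FiniteDimensional ℝ E]
    (hconv : ConvexENN F) (hlsc : LowerSemicontinuous F) (hF0 : F 0 = 0)
    (w : α → E) (hw : Integrable w μ) :
    F (∫ s, w s ∂μ) ≤ ∫⁻ s, F (w s) ∂μ := by
  haveI : CompleteSpace E := FiniteDimensional.complete ℝ E
  have key : ∀ n : ℕ, moreau F n (∫ s, w s ∂μ) ≤ ∫⁻ s, F (w s) ∂μ := by
    intro n
    have hgint : Integrable (fun s => moreauR F n (w s)) μ := by
      refine Integrable.mono (hw.norm.const_mul n)
        ((moreauR_continuous hF0 n).comp_aestronglyMeasurable hw.1) ?_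
      refine ae_of_all _ fun s => ?_
      rw [Real.norm_eq_abs, abs_of_nonneg (moreauR_nonneg n (w s)), Real.norm_eq_abs,
        abs_of_nonneg (by positivity)]
      exact moreauR_le hF0 n (w s)
    have hjensen := (moreauR_convexOn hconv hF0 n).map_integral_le
      ((moreauR_continuous hF0 n).continuousOn) isClosed_univ
      (ae_of_all _ fun s => Set.mem_univ (w s)) hw hgint
    calc moreau F n (∫ s, w s ∂μ) = ENNReal.ofReal (moreauR F n (∫ s, w s ∂μ)) :=
          (ofReal_moreauR hF0 n _).symm
      _ ≤ ENNReal.ofReal (∫ s, moreauR F n (w s) ∂μ) := ENNReal.ofReal_le_ofReal hjensen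
      _ = ∫⁻ s, ENNReal.ofReal (moreauR F n (w s)) ∂μ := by
          rw [ofReal_integral_eq_lintegral_ofReal hgint
            (ae_of_all _ fun s => moreauR_nonneg n (w s))]
      _ = ∫⁻ s, moreau F n (w s) ∂μ := by
          refine lintegral_congr fun s => ofReal_moreauR hF0 n (w s)
      _ ≤ ∫⁻ s, F (w s) ∂μ := lintegral_mono fun s => moreau_le_self n (w s)
  calc F (∫ s, w s ∂μ) = ⨆ n : ℕ, moreau F n (∫ s, w s ∂μ) := (moreau_iSup hlsc _).symm
    _ ≤ ∫⁻ s, F (w s) ∂μ := iSup_le key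

end Jensen2

section Conv

variable {E : Type*} [NormedAddCommGroup E] [NormedSpace ℝ E]

/-- The uniform probability measure on `[a, a + h]`. -/
noncomputable def pmeas (h a : ℝ) : Measure ℝ :=
  (ENNReal.ofReal h)⁻¹ • volume.restrict (Set.Icc a (a + h))

lemma pmeas_prob (h a : ℝ) (hh : 0 < h) : IsProbabilityMeasure (pmeas h a) := by
  constructor
  rw [pmeas, Measure.smul_apply, Measure.restrict_apply MeasurableSet.univ, Set.univ_inter,
    Real.volume_Icc, smul_eq_mul, show a + h - a = h by ring]
  exact ENNReal.inv_mul_cancel (ENNReal.ofReal_pos.2 hh).ne' ENNReal.ofReal_ne_top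

lemma convT_etaP (h : ℝ) (hh : 0 < h) (w : ℝ → E) (t : ℝ) :
    convT (etaP h) w t = ∫ s, w s ∂(pmeas h t) := by
  rw [pmeas, integral_smul_measure, convT]
  have hpt : ∀ s : ℝ, etaP h (t - s) • w s = h⁻¹ • (Set.Icc t (t + h)).indicator w s := by
    intro s
    rw [etaP]
    by_cases hs : s ∈ Set.Icc t (t + h)
    · obtain ⟨h1, h2⟩ := Set.mem_Icc.mp hs
      have hm : t - s ∈ Set.Icc (-h) 0 := Set.mem_Icc.mpr ⟨by linarith, by linarith⟩
      rw [Set.indicator_of_mem hm, Set.indicator_of_mem hs, mul_one]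
    · have hm : t - s ∉ Set.Icc (-h) 0 := by
        intro hm
        obtain ⟨h1, h2⟩ := Set.mem_Icc.mp hm
        exact hs (Set.mem_Icc.mpr ⟨by linarith, by linarith⟩)
      rw [Set.indicator_of_notMem hm, Set.indicator_of_notMem hs, mul_zero, zero_smul,
        smul_zero]
  simp_rw [hpt]
  rw [integral_smul, integral_indicator measurableSet_Icc, ENNReal.toReal_inv,
    ENNReal.toReal_ofReal hh.le]

lemma convT_etaM (h : ℝ) (hh : 0 < h) (w : ℝ → E) (t : ℝ) :
    convT (etaM h) w t = ∫ s, w s ∂(pmeas h (t - h)) := by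
  rw [pmeas, integral_smul_measure, convT]
  have hpt : ∀ s : ℝ, etaM h (t - s) • w s = h⁻¹ • (Set.Icc (t - h) (t - h + h)).indicator w s := by
    intro s
    rw [etaM]
    by_cases hs : s ∈ Set.Icc (t - h) (t - h + h)
    · obtain ⟨h1, h2⟩ := Set.mem_Icc.mp hs
      have hm : t - s ∈ Set.Icc 0 h := Set.mem_Icc.mpr ⟨by linarith, by linarith⟩
      rw [Set.indicator_of_mem hm, Set.indicator_of_mem hs, mul_one]
    · have hm : t - s ∉ Set.Icc 0 h := by
        intro hm
        obtain ⟨h1, h2⟩ := Set.mem_Icc.mp hm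
        exact hs (Set.mem_Icc.mpr ⟨by linarith, by linarith⟩)
      rw [Set.indicator_of_notMem hm, Set.indicator_of_notMem hs, mul_zero, zero_smul,
        smul_zero]
  simp_rw [hpt]
  rw [integral_smul, integral_indicator measurableSet_Icc, ENNReal.toReal_inv,
    ENNReal.toReal_ofReal hh.le]

lemma prodind_meas (h c : ℝ) (G : ℝ → ℝ≥0∞) (hG : Measurable G) :
    Measurable (Function.uncurry fun t s => (Set.Icc (t + c) (t + c + h)).indicator G s) := by
  have hset : MeasurableSet {p : ℝ × ℝ | p.1 + c ≤ p.2 ∧ p.2 ≤ p.1 + c + h} :=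
    (measurableSet_le (measurable_fst.add_const c) measurable_snd).inter
      (measurableSet_le measurable_snd ((measurable_fst.add_const c).add_const h))
  have heq : Function.uncurry (fun t s => (Set.Icc (t + c) (t + c + h)).indicator G s)
      = {p : ℝ × ℝ | p.1 + c ≤ p.2 ∧ p.2 ≤ p.1 + c + h}.indicator (fun p => G p.2) := by
    ext ⟨t, s⟩
    simp [Function.uncurry, Set.indicator_apply, Set.mem_Icc, Set.mem_setOf_eq]
  rw [heq]
  exact (hG.comp measurable_snd).indicator hset

lemma avg_meas (h c : ℝ) (G : ℝ → ℝ≥0∞) (hG : Measurable G) :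
    Measurable fun t => (ENNReal.ofReal h)⁻¹ * ∫⁻ s in Set.Icc (t + c) (t + c + h), G s := by
  have heq : ∀ t, ∫⁻ s in Set.Icc (t + c) (t + c + h), G s
      = ∫⁻ s, (Set.Icc (t + c) (t + c + h)).indicator G s := by
    intro t; rw [lintegral_indicator measurableSet_Icc]
  simp_rw [heq]
  exact (Measurable.lintegral_prod_right (prodind_meas h c G hG)).const_mul _

lemma avg_le (h : ℝ) (hh : 0 < h) (c : ℝ) (G : ℝ → ℝ≥0∞) (hG : Measurable G) :
    ∫⁻ t, (ENNReal.ofReal h)⁻¹ * ∫⁻ s in Set.Icc (t + c) (t + c + h), G s ≤ ∫⁻ s, G s := by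
  have hne : ENNReal.ofReal h ≠ 0 := (ENNReal.ofReal_pos.2 hh).ne'
  have heq1 : ∀ t, (ENNReal.ofReal h)⁻¹ * ∫⁻ s in Set.Icc (t + c) (t + c + h), G s
      = ∫⁻ s, (ENNReal.ofReal h)⁻¹ * (Set.Icc (t + c) (t + c + h)).indicator G s := by
    intro t
    rw [lintegral_const_mul' _ _ (by simp [hne]), lintegral_indicator measurableSet_Icc]
  simp_rw [heq1]
  rw [lintegral_lintegral_swap (((prodind_meas h c G hG).const_mul _).aemeasurable)]
  refine le_of_eq (lintegral_congr fun s => ?_)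
  have heq2 : ∀ t : ℝ, (ENNReal.ofReal h)⁻¹ * (Set.Icc (t + c) (t + c + h)).indicator G s
      = (Set.Icc (s - c - h) (s - c)).indicator (fun _ => (ENNReal.ofReal h)⁻¹ * G s) t := by
    intro t
    simp only [Set.indicator_apply, Set.mem_Icc]
    by_cases hc1 : t + c ≤ s ∧ s ≤ t + c + h
    · rw [if_pos hc1, if_pos ⟨by linarith [hc1.2], by linarith [hc1.1]⟩]
    · rw [if_neg hc1, if_neg, mul_zero]
      intro hc2
      exact hc1 ⟨by linarith [hc2.2], by linarith [hc2.1]⟩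
  simp_rw [heq2]
  rw [lintegral_indicator_const measurableSet_Icc, Real.volume_Icc,
    show s - c - (s - c - h) = h by ring, mul_comm (ENNReal.ofReal h)⁻¹ (G s), mul_assoc,
    ENNReal.inv_mul_cancel hne ENNReal.ofReal_ne_top, mul_one]

end Conv

lemma cutoff_le {E : Type*} [AddCommMonoid E] [Module ℝ E] {F : E → ℝ≥0∞}
    (hconv : ConvexENN F) (hF0 : F 0 = 0) {a : ℝ} (ha : a ∈ Set.Icc (0:ℝ) 1) (x : E) :
    F (a • x) ≤ F x := by
  have h := hconv x 0 a (1 - a) ha.1 (by linarith [ha.2]) (by ring)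
  rw [smul_zero, add_zero, hF0, mul_zero, add_zero] at h
  refine h.trans ?_
  calc ENNReal.ofReal a * F x ≤ 1 * F x := by
        gcongr
        exact ENNReal.ofReal_le_one.mpr ha.2
    _ = F x := one_mul _

lemma part_one {E : Type*} [NormedAddCommGroup E] [NormedSpace ℝ E] [FiniteDimensional ℝ E]
    (T : ℝ) (F : E → ℝ≥0∞) (hconv : ConvexENN F) (hlsc : LowerSemicontinuous F) (hF0 : F 0 = 0)
    (v : ℝ → E) (hvint : Integrable v)
    (ξε : ℝ → ℝ)
    (hξcont : Continuous ξε) (hξ01 : ∀ t, ξε t ∈ Set.Icc (0:ℝ) 1)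
    (hξsupp : Function.support ξε ⊆ Set.Ioo 0 T)
    (h : ℝ) (hh : 0 < h) :
    (∫⁻ t in Set.Icc (0:ℝ) T, F (reg h ξε v t)) ≤ ∫⁻ t in Set.Icc (0:ℝ) T, F (ξε t • v t) := by
  classical
  borelize E
  haveI : CompleteSpace E := FiniteDimensional.complete ℝ E
  have hFmeas : Measurable F := hlsc.measurable
  obtain ⟨u, hu_sm, huv⟩ := hvint.1
  have hne : ENNReal.ofReal h ≠ 0 := (ENNReal.ofReal_pos.2 hh).ne'
  have hcne : ((ENNReal.ofReal h)⁻¹ : ℝ≥0∞) ≠ ∞ := by simp [hne]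
  -- the two versions of the truncated function
  have hw₁ae : (fun r => ξε r • v r) =ᵐ[volume] (fun r => ξε r • u r) :=
    huv.mono fun r hr => by simp only [hr]
  have hw₁m_sm : StronglyMeasurable (fun r => ξε r • u r) := hξcont.stronglyMeasurable.smul hu_sm
  have hw₁int : Integrable (fun r => ξε r • v r) := by
    refine Integrable.mono hvint (hξcont.aestronglyMeasurable.smul hvint.1)
      (ae_of_all _ fun r => ?_)
    rw [norm_smul, Real.norm_eq_abs, abs_of_nonneg (hξ01 r).1]
    nlinarith [norm_nonneg (v r), (hξ01 r).1, (hξ01 r).2]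
  have hw₁mint : Integrable (fun r => ξε r • u r) := hw₁int.congr hw₁ae
  have hGmeas : Measurable (fun r => F (ξε r • u r)) := hFmeas.comp hw₁m_sm.measurable
  -- step 1 : Jensen for the inner convolution
  have step1 : ∀ t : ℝ, F (convT (etaP h) (fun r => ξε r • v r) t)
      ≤ (ENNReal.ofReal h)⁻¹ * ∫⁻ r in Set.Icc (t + 0) (t + 0 + h), F (ξε r • u r) := by
    intro t
    simp only [add_zero]
    haveI := pmeas_prob h t hh
    have hwint : Integrable (fun r => ξε r • v r) (pmeas h t) :=
      (hw₁int.integrableOn (s := Set.Icc t (t + h))).smul_measure hcne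
    have hj := jensenENN (pmeas h t) hconv hlsc hF0 _ hwint
    rw [convT_etaP h hh]
    refine hj.trans (le_of_eq ?_)
    have hcong : ∫⁻ s, F (ξε s • v s) ∂(pmeas h t) = ∫⁻ s, F (ξε s • u s) ∂(pmeas h t) := by
      refine lintegral_congr_ae ?_
      exact Measure.ae_smul_measure (ae_restrict_of_ae (hw₁ae.mono fun r hr => by
        simp only [hr])) _
    rw [hcong, pmeas, lintegral_smul_measure, smul_eq_mul]
  -- the inner convolution as a function
  have hw₂eq : ∀ t : ℝ, convT (etaP h) (fun r => ξε r • v r) t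
      = h⁻¹ • ∫ s, (Set.Icc t (t + h)).indicator (fun r => ξε r • u r) s := by
    intro t
    rw [convT_etaP h hh, pmeas, integral_smul_measure, ENNReal.toReal_inv,
      ENNReal.toReal_ofReal hh.le]
    congr 1
    calc ∫ s in Set.Icc t (t + h), ξε s • v s
        = ∫ s in Set.Icc t (t + h), ξε s • u s := integral_congr_ae (ae_restrict_of_ae hw₁ae)
      _ = ∫ s, (Set.Icc t (t + h)).indicator (fun r => ξε r • u r) s :=
          (integral_indicator measurableSet_Icc).symm
  have hw₂sm : StronglyMeasurable (fun t => convT (etaP h) (fun r => ξε r • v r) t) := by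
    have hset : MeasurableSet {p : ℝ × ℝ | p.1 ≤ p.2 ∧ p.2 ≤ p.1 + h} :=
      (measurableSet_le measurable_fst measurable_snd).inter
        (measurableSet_le measurable_snd (measurable_fst.add_const h))
    have hsm2 : StronglyMeasurable
        ({p : ℝ × ℝ | p.1 ≤ p.2 ∧ p.2 ≤ p.1 + h}.indicator (fun p => ξε p.2 • u p.2)) :=
      (hw₁m_sm.comp_measurable measurable_snd).indicator hset
    have heq : (Function.uncurry fun t s => (Set.Icc t (t + h)).indicator
          (fun r => ξε r • u r) s)
        = {p : ℝ × ℝ | p.1 ≤ p.2 ∧ p.2 ≤ p.1 + h}.indicator (fun p => ξε p.2 • u p.2) := by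
      ext ⟨t, s⟩
      simp [Function.uncurry, Set.indicator_apply, Set.mem_Icc, Set.mem_setOf_eq]
    have hsm3 : StronglyMeasurable fun t =>
        ∫ s, (Set.Icc t (t + h)).indicator (fun r => ξε r • u r) s := by
      apply MeasureTheory.StronglyMeasurable.integral_prod_right
        (f := fun t s => (Set.Icc t (t + h)).indicator (fun r => ξε r • u r) s)
      rw [heq]
      exact hsm2
    have : (fun t => convT (etaP h) (fun r => ξε r • v r) t)
        = fun t => h⁻¹ • ∫ s, (Set.Icc t (t + h)).indicator (fun r => ξε r • u r) s :=
      funext hw₂eq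
    rw [this]
    exact hsm3.const_smul _
  have hw₂bdd : ∀ t : ℝ, ‖convT (etaP h) (fun r => ξε r • v r) t‖
      ≤ h⁻¹ * ∫ s, ‖ξε s • u s‖ := by
    intro t
    rw [hw₂eq t, norm_smul, Real.norm_eq_abs, abs_of_nonneg (inv_nonneg.2 hh.le)]
    have h1 : ‖∫ s, (Set.Icc t (t + h)).indicator (fun r => ξε r • u r) s‖
        ≤ ∫ s, ‖(Set.Icc t (t + h)).indicator (fun r => ξε r • u r) s‖ :=
      norm_integral_le_integral_norm _
    have h2 : ∫ s, ‖(Set.Icc t (t + h)).indicator (fun r => ξε r • u r) s‖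
        ≤ ∫ s, ‖ξε s • u s‖ := by
      refine integral_mono ((hw₁mint.indicator measurableSet_Icc).norm) hw₁mint.norm fun s => ?_
      exact norm_indicator_le_norm_self _ _
    have := h1.trans h2
    gcongr
  -- step 2 : Jensen for the outer convolution
  have step2 : ∀ t : ℝ, F (convT (etaM h) (convT (etaP h) (fun r => ξε r • v r)) t)
      ≤ (ENNReal.ofReal h)⁻¹ * ∫⁻ s in Set.Icc (t + -h) (t + -h + h),
          ((ENNReal.ofReal h)⁻¹ * ∫⁻ r in Set.Icc (s + 0) (s + 0 + h), F (ξε r • u r)) := by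
    intro t
    haveI := pmeas_prob h (t - h) hh
    have hw₂int : Integrable (convT (etaP h) (fun r => ξε r • v r)) (pmeas h (t - h)) := by
      refine ⟨hw₂sm.aestronglyMeasurable, ?_⟩
      exact HasFiniteIntegral.of_bounded (ae_of_all _ hw₂bdd)
    have hj := jensenENN (pmeas h (t - h)) hconv hlsc hF0 _ hw₂int
    rw [convT_etaM h hh]
    refine hj.trans ?_
    have hmono : ∫⁻ s, F (convT (etaP h) (fun r => ξε r • v r) s) ∂(pmeas h (t - h))
        ≤ ∫⁻ s, ((ENNReal.ofReal h)⁻¹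
            * ∫⁻ r in Set.Icc (s + 0) (s + 0 + h), F (ξε r • u r)) ∂(pmeas h (t - h)) :=
      lintegral_mono step1
    refine hmono.trans (le_of_eq ?_)
    rw [pmeas, lintegral_smul_measure, smul_eq_mul, show t + -h = t - h by ring]
  -- step 3 : cut-off
  have step3 : ∀ t : ℝ, F (reg h ξε v t)
      ≤ F (convT (etaM h) (convT (etaP h) (fun r => ξε r • v r)) t) := by
    intro t
    rw [reg]
    exact cutoff_le hconv hF0 (hξ01 t) _
  calc ∫⁻ t in Set.Icc (0:ℝ) T, F (reg h ξε v t)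
      ≤ ∫⁻ t in Set.Icc (0:ℝ) T, (ENNReal.ofReal h)⁻¹ * ∫⁻ s in Set.Icc (t + -h) (t + -h + h),
          ((ENNReal.ofReal h)⁻¹ * ∫⁻ r in Set.Icc (s + 0) (s + 0 + h), F (ξε r • u r)) :=
        lintegral_mono fun t => (step3 t).trans (step2 t)
    _ ≤ ∫⁻ t, (ENNReal.ofReal h)⁻¹ * ∫⁻ s in Set.Icc (t + -h) (t + -h + h),
          ((ENNReal.ofReal h)⁻¹ * ∫⁻ r in Set.Icc (s + 0) (s + 0 + h), F (ξε r • u r)) :=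
        setLIntegral_le_lintegral _ _
    _ ≤ ∫⁻ s, (ENNReal.ofReal h)⁻¹ * ∫⁻ r in Set.Icc (s + 0) (s + 0 + h), F (ξε r • u r) :=
        avg_le h hh (-h) _ (avg_meas h 0 _ hGmeas)
    _ ≤ ∫⁻ r, F (ξε r • u r) := avg_le h hh 0 _ hGmeas
    _ = ∫⁻ r in Set.Icc (0:ℝ) T, F (ξε r • u r) := by
        rw [← lintegral_indicator measurableSet_Icc]
        refine lintegral_congr fun r => ?_
        by_cases hr : r ∈ Set.Icc (0:ℝ) T
        · rw [Set.indicator_of_mem hr]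
        · rw [Set.indicator_of_notMem hr]
          have hξr : ξε r = 0 := by
            by_contra hcon
            exact hr (Set.Ioo_subset_Icc_self (hξsupp (Function.mem_support.mpr hcon)))
          rw [hξr, zero_smul, hF0]
    _ = ∫⁻ t in Set.Icc (0:ℝ) T, F (ξε t • v t) := by
        refine lintegral_congr_ae (ae_restrict_of_ae (huv.mono fun r hr => ?_))
        simp only [hr]

lemma part_two {E : Type*} [NormedAddCommGroup E] [NormedSpace ℝ E] [FiniteDimensional ℝ E]
    (T : ℝ) (hT : 0 < T)
    (F : E → ℝ≥0∞) (hconv : ConvexENN F) (hlsc : LowerSemicontinuous F) (hF0 : F 0 = 0)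
    (v : ℝ → E) (hvint : Integrable v)
    (ξ : ℝ → ℝ → ℝ)
    (hξ01 : ∀ ε > (0:ℝ), ∀ t, ξ ε t ∈ Set.Icc (0:ℝ) 1)
    (hξone : ∀ ε > (0:ℝ), ∀ t ∈ Set.Icc ε (T - ε), ξ ε t = 1) :
    Tendsto (fun ε => ∫⁻ t in Set.Icc (0:ℝ) T, F (ξ ε t • v t)) (𝓝[>] 0)
      (𝓝 (∫⁻ t in Set.Icc (0:ℝ) T, F (v t))) := by
  borelize E
  have hFmeas : Measurable F := hlsc.measurable
  obtain ⟨u, hu_sm, huv⟩ := hvint.1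
  have hgmeas : Measurable (fun t => F (u t)) := hFmeas.comp hu_sm.measurable
  set ν : Measure ℝ := (volume.restrict (Set.Icc (0:ℝ) T)).withDensity (fun t => F (u t))
    with hν
  have hupper : ∀ ε > (0:ℝ), (∫⁻ t in Set.Icc (0:ℝ) T, F (ξ ε t • v t))
      ≤ ∫⁻ t in Set.Icc (0:ℝ) T, F (v t) :=
    fun ε hε => lintegral_mono fun t => cutoff_le hconv hF0 (hξ01 ε hε t) _
  have hνIcc : ∀ a b : ℝ, ν (Set.Icc a b) = ∫⁻ t in Set.Icc a b ∩ Set.Icc (0:ℝ) T, F (u t) := by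
    intro a b
    rw [hν, withDensity_apply _ measurableSet_Icc, Measure.restrict_restrict measurableSet_Icc]
  have hL : ∫⁻ t in Set.Icc (0:ℝ) T, F (v t) = ∫⁻ t in Set.Icc (0:ℝ) T, F (u t) :=
    lintegral_congr_ae (ae_restrict_of_ae (huv.mono fun t ht => by simp only [ht]))
  refine tendsto_order.2 ⟨?_, ?_⟩
  · intro c hc
    have hIoo : ν (Set.Ioo 0 T) = ∫⁻ t in Set.Icc (0:ℝ) T, F (v t) := by
      rw [hL, hν, withDensity_apply _ measurableSet_Ioo,
        Measure.restrict_restrict measurableSet_Ioo,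
        Set.inter_eq_left.mpr Set.Ioo_subset_Icc_self]
      exact setLIntegral_congr Ioo_ae_eq_Icc
    have hmono : Monotone (fun n : ℕ => Set.Icc (1/(n+1) : ℝ) (T - 1/(n+1))) := by
      intro n m hnm
      have hcast : (n:ℝ) ≤ m := Nat.cast_le.mpr hnm
      have h1 : (1/(m+1) : ℝ) ≤ 1/(n+1) :=
        one_div_le_one_div_of_le (by positivity) (by linarith)
      exact Set.Icc_subset_Icc h1 (by linarith)
    have hunion : (⋃ n : ℕ, Set.Icc (1/(n+1) : ℝ) (T - 1/(n+1))) = Set.Ioo 0 T := by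
      ext x
      simp only [Set.mem_iUnion, Set.mem_Icc, Set.mem_Ioo]
      constructor
      · rintro ⟨n, h1, h2⟩
        have hp : (0:ℝ) < 1/(n+1) := by positivity
        exact ⟨lt_of_lt_of_le hp h1, by nlinarith⟩
      · rintro ⟨h1, h2⟩
        obtain ⟨n, hn⟩ := exists_nat_one_div_lt (lt_min h1 (by linarith) : (0:ℝ) < min x (T - x))
        obtain ⟨ha, hb⟩ := le_min_iff.mp hn.le
        exact ⟨n, ha, by linarith⟩
    have hsup : ν (Set.Ioo 0 T) = ⨆ n : ℕ, ν (Set.Icc (1/(n+1) : ℝ) (T - 1/(n+1))) := by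
      rw [← hunion]
      exact hmono.directed_le.measure_iUnion
    rw [← hIoo, hsup] at hc
    obtain ⟨n, hn⟩ := lt_iSup_iff.mp hc
    have hδ : (0:ℝ) < 1/(n+1) := by positivity
    filter_upwards [Ioo_mem_nhdsGT_of_mem (Set.mem_Ico.mpr ⟨le_refl (0:ℝ), hδ⟩)] with ε hε
    obtain ⟨hε0, hεδ⟩ := hε
    have key : ν (Set.Icc (1/(n+1):ℝ) (T - 1/(n+1)))
        ≤ ∫⁻ t in Set.Icc (0:ℝ) T, F (ξ ε t • v t) := by
      rw [hνIcc]
      have hmeasS : MeasurableSet (Set.Icc (1/(n+1):ℝ) (T - 1/(n+1)) ∩ Set.Icc 0 T) :=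
        measurableSet_Icc.inter measurableSet_Icc
      calc ∫⁻ t in Set.Icc (1/(n+1):ℝ) (T - 1/(n+1)) ∩ Set.Icc 0 T, F (u t)
          = ∫⁻ t in Set.Icc (1/(n+1):ℝ) (T - 1/(n+1)) ∩ Set.Icc 0 T, F (ξ ε t • v t) := by
            refine lintegral_congr_ae ?_
            filter_upwards [ae_restrict_mem hmeasS, ae_restrict_of_ae huv] with t ht htv
            have hξ1 : ξ ε t = 1 := by
              refine hξone ε hε0 t (Set.mem_Icc.mpr ⟨?_, ?_⟩)
              · linarith [(Set.mem_Icc.mp ht.1).1]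
              · linarith [(Set.mem_Icc.mp ht.1).2]
            rw [hξ1, one_smul, htv]
        _ ≤ ∫⁻ t in Set.Icc (0:ℝ) T, F (ξ ε t • v t) :=
            lintegral_mono_set Set.inter_subset_right
    exact lt_of_lt_of_le hn key
  · intro c hc
    filter_upwards [self_mem_nhdsWithin] with ε hε
    exact lt_of_le_of_lt (hupper ε hε) hc


/-- **Regularization in time via Steklov averages.**  For convex lsc `F : E → [0, ∞]` with
`F(0) = 0` and `v : ℝ → E` Bochner integrable, supported in `[0, T]`, with
`∫₀^T F(v) dt < ∞`, and cut-offs `ξ_ε` as described: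
(i) `∫₀^T F([v]_{h,ε}) dt ≤ ∫₀^T F(ξ_ε v) dt` for all `h, ε > 0`;
(ii) `∫₀^T F(ξ_ε v) dt → ∫₀^T F(v) dt` as `ε → 0⁺`;
consequently `limsup_{ε→0⁺} sup_{h>0} ∫₀^T F([v]_{h,ε}) dt ≤ ∫₀^T F(v) dt`. -/
theorem stmt10 {E : Type*} [NormedAddCommGroup E] [InnerProductSpace ℝ E]
    [FiniteDimensional ℝ E]
    (T : ℝ) (hT : 0 < T)
    (F : E → ℝ≥0∞) (hconv : ConvexENN F) (hlsc : LowerSemicontinuous F) (hF0 : F 0 = 0)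
    (v : ℝ → E) (hvint : Integrable v)
    (hsupp : ∀ t : ℝ, t ∉ Set.Icc 0 T → v t = 0)
    (hFint : (∫⁻ t in Set.Icc (0 : ℝ) T, F (v t)) < ∞)
    (ξ : ℝ → ℝ → ℝ)
    (hξcont : ∀ ε > (0 : ℝ), Continuous (ξ ε))
    (hξ01 : ∀ ε > (0 : ℝ), ∀ t, ξ ε t ∈ Set.Icc (0 : ℝ) 1)
    (hξsupp : ∀ ε > (0 : ℝ), Function.support (ξ ε) ⊆ Set.Ioo 0 T)
    (hξone : ∀ ε > (0 : ℝ), ∀ t ∈ Set.Icc ε (T - ε), ξ ε t = 1) :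
    (∀ ε > (0 : ℝ), ∀ h > (0 : ℝ),
        (∫⁻ t in Set.Icc (0 : ℝ) T, F (reg h (ξ ε) v t)) ≤
          ∫⁻ t in Set.Icc (0 : ℝ) T, F (ξ ε t • v t)) ∧
      Tendsto (fun ε => ∫⁻ t in Set.Icc (0 : ℝ) T, F (ξ ε t • v t)) (𝓝[>] 0)
        (𝓝 (∫⁻ t in Set.Icc (0 : ℝ) T, F (v t))) ∧
      Filter.limsup
          (fun ε => ⨆ (h : ℝ) (_ : 0 < h), ∫⁻ t in Set.Icc (0 : ℝ) T, F (reg h (ξ ε) v t))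
          (𝓝[>] (0 : ℝ)) ≤
        ∫⁻ t in Set.Icc (0 : ℝ) T, F (v t) := by
  refine ⟨?_, ?_, ?_⟩
  · intro ε hε h hh
    exact part_one T F hconv hlsc hF0 v hvint (ξ ε) (hξcont ε hε) (hξ01 ε hε) (hξsupp ε hε) h hh
  · exact part_two T hT F hconv hlsc hF0 v hvint ξ hξ01 hξone
  · have h1 : ∀ᶠ ε in 𝓝[>] (0:ℝ),
        (⨆ (h : ℝ) (_ : 0 < h), ∫⁻ t in Set.Icc (0:ℝ) T, F (reg h (ξ ε) v t))
          ≤ ∫⁻ t in Set.Icc (0:ℝ) T, F (ξ ε t • v t) := by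
      filter_upwards [self_mem_nhdsWithin] with ε hε
      exact iSup₂_le fun h hh =>
        part_one T F hconv hlsc hF0 v hvint (ξ ε) (hξcont ε hε) (hξ01 ε hε) (hξsupp ε hε) h hh
    refine le_trans (limsup_le_limsup h1) (le_of_eq ?_)
    exact (part_two T hT F hconv hlsc hF0 v hvint ξ hξ01 hξone).limsup_eq
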